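/- Let the activation function g and the loss ℒ (in its second argument) be differentiable, and let θ satisfy ∇_θ R_emp(θ) = 0. Let R = {r_1,…,r_t} ⊆ {1,…,L−1}, Γ = {K_{r_1},…,K_{r_t}}, and let θ̂ = B_{ζ0}(θ, R, Γ) be the composition of β embeddings with zero outgoing weights adding K_{r_i} neurons to layer r_i for i = 1,…,t. Then θ̂ is a stationary point of the empirical risk of the enlarged network: ∇_{θ̂} R̂_emp(θ̂) = 0. -/

import Mathlib

/-- Parameters of a fully connected feedforward network: `w ℓ j i` is the weight from
unit `i` of layer `ℓ-1` to unit `j` of layer `ℓ`, and `b ℓ j` is the bias of unit `j`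
of layer `ℓ`.  Layers are numbered `1, …, L` (layer `0` is the input); units within a
layer are numbered from `0`, so layer `ℓ` consists of the units `0, …, H ℓ - 1`. -/
structure NNParams where
  w : ℕ → ℕ → ℕ → ℝ
  b : ℕ → ℕ → ℝ

/-- `layerOut g H θ x ℓ i` : the output of unit `i` of layer `ℓ` on input `x`
(`layerOut g H θ x 0 = x`, and for `ℓ ≥ 1` it is `g` applied to the pre-activation). -/
noncomputable def layerOut (g : ℝ → ℝ) (H : ℕ → ℕ) (θ : NNParams) (x : ℕ → ℝ) :
    ℕ → ℕ → ℝ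
  | 0, i => x i
  | ℓ + 1, i =>
      g (∑ j ∈ Finset.range (H ℓ), θ.w (ℓ + 1) i j * layerOut g H θ x ℓ j + θ.b (ℓ + 1) i)

/-- Pre-activation `a_j^ℓ(x, θ)` of unit `j` of layer `ℓ ≥ 1`:
`a_j^ℓ = ∑_{i < H (ℓ-1)} w_{ji}^ℓ · (output of unit i of layer ℓ-1) + σ_j^ℓ`.
The outputs of the last layer `L` are `f_r(x,θ) = preact g H θ x L r` (linear output units). -/
noncomputable def preact (g : ℝ → ℝ) (H : ℕ → ℕ) (θ : NNParams) (x : ℕ → ℝ)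
    (ℓ j : ℕ) : ℝ :=
  ∑ i ∈ Finset.range (H (ℓ - 1)), θ.w ℓ j i * layerOut g H θ x (ℓ - 1) i + θ.b ℓ j

/-- Empirical risk `R_emp(θ) = (1/P) ∑_{p<P} ℒ(y^p, f(x^p, θ))`, where the network has
`L` layers with layer sizes given by `H`, the training inputs are `X p` and the labels
`Y p`, and `m` is the output dimension seen by the loss. -/
noncomputable def Remp (g : ℝ → ℝ) (H : ℕ → ℕ) (L P : ℕ) {m : ℕ}
    (X Y : ℕ → ℕ → ℝ) (loss : (ℕ → ℝ) → (Fin m → ℝ) → ℝ) (θ : NNParams) : ℝ :=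
  (1 / (P : ℝ)) * ∑ p ∈ Finset.range P,
    loss (Y p) (fun r => preact g H θ (X p) L r)

/-- Layer sizes of the network enlarged by adding `K` new neurons to layer `l`. -/
def enlargeH (H : ℕ → ℕ) (l K : ℕ) : ℕ → ℕ :=
  fun ℓ => if ℓ = l then H l + K else H ℓ

/-- The embedding `α_{ζv}` : copy all parameters, give the `k`-th new neuron of layer `l`
(`k = 0, …, K-1`, i.e. unit `H l + k`) the bias `ζ k` and incoming weights `v k`, and
set all weights from the new neurons to layer `l+1` to zero. -/
noncomputable def alphaEmb (H : ℕ → ℕ) (l K : ℕ) (ζ : ℕ → ℝ) (v : ℕ → ℕ → ℝ)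
    (θ : NNParams) : NNParams where
  w := fun ℓ j i =>
    if ℓ = l ∧ H l ≤ j then v (j - H l) i
    else if ℓ = l + 1 ∧ H l ≤ i then 0
    else θ.w ℓ j i
  b := fun ℓ j => if ℓ = l ∧ H l ≤ j then ζ (j - H l) else θ.b ℓ j

/-- The embedding `β_{ζs}` : copy all parameters except the biases of layer `l+1`, give
the `k`-th new neuron of layer `l` the bias `ζ k` and zero incoming weights, set the
outgoing weight from the `k`-th new neuron to unit `j` of layer `l+1` to `s j k`, and
replace the bias of unit `j` of layer `l+1` by `σ_j - ∑_{k<K} s j k · g (ζ k)`. -/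
noncomputable def betaEmb (g : ℝ → ℝ) (H : ℕ → ℕ) (l K : ℕ) (ζ : ℕ → ℝ)
    (s : ℕ → ℕ → ℝ) (θ : NNParams) : NNParams where
  w := fun ℓ j i =>
    if ℓ = l ∧ H l ≤ j then 0
    else if ℓ = l + 1 ∧ H l ≤ i then s j (i - H l)
    else θ.w ℓ j i
  b := fun ℓ j =>
    if ℓ = l ∧ H l ≤ j then ζ (j - H l)
    else if ℓ = l + 1 then θ.b (l + 1) j - ∑ k ∈ Finset.range K, s j k * g (ζ k)
    else θ.b ℓ j

/-- The embedding `γ_λ` : duplicate unit `h` of layer `l` into each of the `K` new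
neurons (same bias and incoming weights as unit `h`), and split the outgoing weights:
unit `h` keeps `lam 0 · w_{jh}^{l+1}` and the `k`-th new neuron (`k = 0, …, K-1`,
i.e. unit `H l + k`, corresponding to `λ_{k+1}` of the paper) gets
`lam (k+1) · w_{jh}^{l+1}`; all other parameters are copied. -/
noncomputable def gammaEmb (H : ℕ → ℕ) (l K : ℕ) (h : ℕ) (lam : ℕ → ℝ)
    (θ : NNParams) : NNParams where
  w := fun ℓ j i =>
    if ℓ = l ∧ H l ≤ j then θ.w l h i
    else if ℓ = l + 1 ∧ i = h then lam 0 * θ.w (l + 1) j h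
    else if ℓ = l + 1 ∧ H l ≤ i then lam (i - H l + 1) * θ.w (l + 1) j h
    else θ.w ℓ j i
  b := fun ℓ j => if ℓ = l ∧ H l ≤ j then θ.b l h else θ.b ℓ j

/-- `θ` with the single weight `w ℓ j i` replaced by `t`. -/
noncomputable def updW (θ : NNParams) (ℓ j i : ℕ) (t : ℝ) : NNParams :=
  ⟨fun ℓ' j' i' => if ℓ' = ℓ ∧ j' = j ∧ i' = i then t else θ.w ℓ' j' i', θ.b⟩

/-- `θ` with the single bias `b ℓ j` replaced by `t`. -/
noncomputable def updB (θ : NNParams) (ℓ j : ℕ) (t : ℝ) : NNParams :=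
  ⟨θ.w, fun ℓ' j' => if ℓ' = ℓ ∧ j' = j then t else θ.b ℓ' j'⟩

/-- `∇ R_emp(θ) = 0` : every partial derivative of the empirical risk with respect to an
actual network parameter (a weight `w ℓ j i` or a bias `b ℓ j`, `1 ≤ ℓ ≤ L`, `j < H ℓ`,
`i < H (ℓ-1)`) vanishes at `θ`. -/
def IsCritical (g : ℝ → ℝ) (H : ℕ → ℕ) (L P : ℕ) {m : ℕ}
    (X Y : ℕ → ℕ → ℝ) (loss : (ℕ → ℝ) → (Fin m → ℝ) → ℝ) (θ : NNParams) : Prop :=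
  (∀ ℓ j i, 1 ≤ ℓ → ℓ ≤ L → j < H ℓ → i < H (ℓ - 1) →
      deriv (fun t => Remp g H L P X Y loss (updW θ ℓ j i t)) (θ.w ℓ j i) = 0) ∧
  ∀ ℓ j, 1 ≤ ℓ → ℓ ≤ L → j < H ℓ →
      deriv (fun t => Remp g H L P X Y loss (updB θ ℓ j t)) (θ.b ℓ j) = 0

/-- Layer sizes after enlarging layer `p.1` by `p.2` neurons for each pair in the list. -/
def multiEnlargeH : (ℕ → ℕ) → List (ℕ × ℕ) → (ℕ → ℕ)
  | H, [] => H
  | H, (l, K) :: rest => multiEnlargeH (enlargeH H l K) rest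

/-- Composition of `α` embeddings: for each `(l, K)` in the list (in order), add `K` new
neurons to layer `l` via `α` with biases `ζ l` and incoming weights `v l`. -/
noncomputable def multiAlpha (ζ : ℕ → ℕ → ℝ) (v : ℕ → ℕ → ℕ → ℝ) :
    (ℕ → ℕ) → List (ℕ × ℕ) → NNParams → NNParams
  | _, [], θ => θ
  | H, (l, K) :: rest, θ =>
      multiAlpha ζ v (enlargeH H l K) rest (alphaEmb H l K (ζ l) (v l) θ)

noncomputable def multiBeta (g : ℝ → ℝ) (ζ : ℕ → ℕ → ℝ) (s : ℕ → ℕ → ℕ → ℝ) :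
    (ℕ → ℕ) → List (ℕ × ℕ) → NNParams → NNParams
  | _, [], θ => θ
  | H, (l, K) :: rest, θ =>
      multiBeta g ζ s (enlargeH H l K) rest (betaEmb g H l K (ζ l) (s l) θ)

noncomputable def multiGamma (hsel : ℕ → ℕ) (lam : ℕ → ℕ → ℝ) :
    (ℕ → ℕ) → List (ℕ × ℕ) → NNParams → NNParams
  | _, [], θ => θ
  | H, (l, K) :: rest, θ =>
      multiGamma hsel lam (enlargeH H l K) rest (gammaEmb H l K (hsel l) (lam l) θ)

/-- A single enlargement step: either a `β` embedding with zero outgoing weights, or a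
`γ` embedding. -/
inductive EmbStep where
  | beta (l K : ℕ) (ζ : ℕ → ℝ)
  | gamma (l K : ℕ) (h : ℕ) (lam : ℕ → ℝ)

def EmbStep.layer : EmbStep → ℕ
  | .beta l _ _ => l
  | .gamma l _ _ _ => l

def EmbStep.count : EmbStep → ℕ
  | .beta _ K _ => K
  | .gamma _ K _ _ => K

noncomputable def EmbStep.apply (g : ℝ → ℝ) (H : ℕ → ℕ) (θ : NNParams) : EmbStep → NNParams
  | .beta l K ζ => betaEmb g H l K ζ (fun _ _ => 0) θ
  | .gamma l K h lam => gammaEmb H l K h lam θ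

def EmbStep.OK (H : ℕ → ℕ) (L : ℕ) : EmbStep → Prop
  | .beta l _ _ => 1 ≤ l ∧ l + 1 ≤ L
  | .gamma l K h lam => 1 ≤ l ∧ l + 1 ≤ L ∧ h < H l ∧ ∑ i ∈ Finset.range (K + 1), lam i = 1

noncomputable def applySteps (g : ℝ → ℝ) : (ℕ → ℕ) → List EmbStep → NNParams → NNParams
  | _, [], θ => θ
  | H, st :: rest, θ =>
      applySteps g (enlargeH H st.layer st.count) rest (EmbStep.apply g H θ st)

def stepsH : (ℕ → ℕ) → List EmbStep → (ℕ → ℕ)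
  | H, [] => H
  | H, st :: rest => stepsH (enlargeH H st.layer st.count) rest


section Aux

/-- Core lemma: if `θ₁` (on the enlarged architecture) agrees with `θ₀` on all old
parameters, and the contribution of the new units of layer `l` to each unit of layer
`l+1` is absorbed into the bias of `θ₀`, then all old layer outputs agree. -/
lemma layerOut_eq_of (g : ℝ → ℝ) (H : ℕ → ℕ) (l K : ℕ) (θ₀ θ₁ : NNParams) (x : ℕ → ℝ)
    (hw : ∀ ℓ j i, (ℓ = l → j < H l) → (ℓ = l + 1 → i < H l) → θ₁.w ℓ j i = θ₀.w ℓ j i)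
    (hb : ∀ ℓ j, ℓ ≠ l + 1 → (ℓ = l → j < H l) → θ₁.b ℓ j = θ₀.b ℓ j)
    (hbnew : ∀ j, θ₁.b (l + 1) j
        + ∑ k ∈ Finset.range K,
            θ₁.w (l + 1) j (H l + k) * layerOut g (enlargeH H l K) θ₁ x l (H l + k)
        = θ₀.b (l + 1) j) :
    ∀ ℓ i, (ℓ = l → i < H l) →
      layerOut g (enlargeH H l K) θ₁ x ℓ i = layerOut g H θ₀ x ℓ i := by
  intro ℓ
  induction ℓ with
  | zero => intro i _; rfl
  | succ ℓ ih =>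
    intro i hi
    by_cases hcase : ℓ = l
    · -- layer ℓ + 1 = l + 1
      subst hcase
      have hne : ℓ + 1 ≠ ℓ := Nat.succ_ne_self ℓ
      have hil : i < H (ℓ + 1) ∨ True := Or.inr trivial
      show g _ = g _
      congr 1
      have hHl : enlargeH H ℓ K ℓ = H ℓ + K := by simp [enlargeH]
      rw [hHl, Finset.sum_range_add]
      have h1 : ∀ j ∈ Finset.range (H ℓ),
          θ₁.w (ℓ + 1) i j * layerOut g (enlargeH H ℓ K) θ₁ x ℓ j
          = θ₀.w (ℓ + 1) i j * layerOut g H θ₀ x ℓ j := by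
        intro j hj
        rw [Finset.mem_range] at hj
        rw [hw (ℓ + 1) i j (fun h => absurd h hne) (fun _ => hj),
          ih j (fun _ => hj)]
      rw [Finset.sum_congr rfl h1, ← hbnew i]; ring
    · -- layer ℓ + 1 ≠ l + 1
      have hne : ℓ + 1 ≠ l + 1 := fun h => hcase (Nat.succ_injective h)
      show g _ = g _
      congr 1
      have hHl : enlargeH H l K ℓ = H ℓ := if_neg hcase
      rw [hHl]
      have h1 : ∀ j ∈ Finset.range (H ℓ),
          θ₁.w (ℓ + 1) i j * layerOut g (enlargeH H l K) θ₁ x ℓ j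
          = θ₀.w (ℓ + 1) i j * layerOut g H θ₀ x ℓ j := by
        intro j hj
        rw [hw (ℓ + 1) i j hi (fun h => absurd h hne),
          ih j (fun h => absurd h hcase)]
      rw [Finset.sum_congr rfl h1, hb (ℓ + 1) i hne hi]

lemma preact_eq_of (g : ℝ → ℝ) (H : ℕ → ℕ) (l K : ℕ) (θ₀ θ₁ : NNParams) (x : ℕ → ℝ)
    (hw : ∀ ℓ j i, (ℓ = l → j < H l) → (ℓ = l + 1 → i < H l) → θ₁.w ℓ j i = θ₀.w ℓ j i)
    (hb : ∀ ℓ j, ℓ ≠ l + 1 → (ℓ = l → j < H l) → θ₁.b ℓ j = θ₀.b ℓ j)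
    (hbnew : ∀ j, θ₁.b (l + 1) j
        + ∑ k ∈ Finset.range K,
            θ₁.w (l + 1) j (H l + k) * layerOut g (enlargeH H l K) θ₁ x l (H l + k)
        = θ₀.b (l + 1) j)
    (L : ℕ) (hL : l + 1 ≤ L) (r : ℕ) :
    preact g (enlargeH H l K) θ₁ x L r = preact g H θ₀ x L r := by
  have hlo := layerOut_eq_of g H l K θ₀ θ₁ x hw hb hbnew
  unfold preact
  by_cases hL1 : L = l + 1
  · subst hL1
    have hL1' : l + 1 - 1 = l := rfl
    rw [hL1']
    have hHl : enlargeH H l K l = H l + K := by simp [enlargeH]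
    rw [hHl, Finset.sum_range_add]
    have h1 : ∀ i ∈ Finset.range (H l),
        θ₁.w (l + 1) r i * layerOut g (enlargeH H l K) θ₁ x l i
        = θ₀.w (l + 1) r i * layerOut g H θ₀ x l i := by
      intro i hiR
      rw [Finset.mem_range] at hiR
      rw [hw (l + 1) r i (by omega) (fun _ => hiR), hlo l i (fun _ => hiR)]
    rw [Finset.sum_congr rfl h1, ← hbnew r]; ring
  · have hLl : L ≠ l := by omega
    have hL1m : L - 1 ≠ l := by omega
    have hHl : enlargeH H l K (L - 1) = H (L - 1) := if_neg hL1m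
    rw [hHl]
    have h1 : ∀ i ∈ Finset.range (H (L - 1)),
        θ₁.w L r i * layerOut g (enlargeH H l K) θ₁ x (L - 1) i
        = θ₀.w L r i * layerOut g H θ₀ x (L - 1) i := by
      intro i _
      rw [hw L r i (fun h => absurd h hLl) (fun h => absurd h hL1),
        hlo (L - 1) i (fun h => absurd h hL1m)]
    rw [Finset.sum_congr rfl h1, hb L r hL1 (fun h => absurd h hLl)]

lemma Remp_eq_of (g : ℝ → ℝ) (H : ℕ → ℕ) (l K : ℕ) (θ₀ θ₁ : NNParams)
    {m : ℕ} (L P : ℕ) (X Y : ℕ → ℕ → ℝ) (loss : (ℕ → ℝ) → (Fin m → ℝ) → ℝ)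
    (hL : l + 1 ≤ L)
    (hw : ∀ ℓ j i, (ℓ = l → j < H l) → (ℓ = l + 1 → i < H l) → θ₁.w ℓ j i = θ₀.w ℓ j i)
    (hb : ∀ ℓ j, ℓ ≠ l + 1 → (ℓ = l → j < H l) → θ₁.b ℓ j = θ₀.b ℓ j)
    (hbnew : ∀ (x : ℕ → ℝ) j, θ₁.b (l + 1) j
        + ∑ k ∈ Finset.range K,
            θ₁.w (l + 1) j (H l + k) * layerOut g (enlargeH H l K) θ₁ x l (H l + k)
        = θ₀.b (l + 1) j) :
    Remp g (enlargeH H l K) L P X Y loss θ₁ = Remp g H L P X Y loss θ₀ := by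
  unfold Remp
  congr 1
  apply Finset.sum_congr rfl
  intro p _
  congr 1
  funext r
  exact preact_eq_of g H l K θ₀ θ₁ (X p) hw hb (hbnew (X p)) L hL r

/-- output of a dead new unit. -/
lemma newOut (g : ℝ → ℝ) (H : ℕ → ℕ) (l K : ℕ) (hl : 1 ≤ l) (θ₁ : NNParams)
    (x : ℕ → ℝ) (j : ℕ)
    (hw0 : ∀ i, θ₁.w l j i = 0) (c : ℝ) (hbz : θ₁.b l j = c) :
    layerOut g (enlargeH H l K) θ₁ x l j = g c := by
  obtain ⟨l', rfl⟩ : ∃ l', l = l' + 1 := ⟨l - 1, (Nat.succ_pred_eq_of_pos hl).symm⟩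
  show g _ = g c
  congr 1
  simp [hw0, hbz]

/-- Differentiability of layer outputs in one bias. -/
lemma layerOut_diffB (g : ℝ → ℝ) (H : ℕ → ℕ) (hg : Differentiable ℝ g)
    (θ : NNParams) (ℓ₀ j₀ : ℕ) (x : ℕ → ℝ) :
    ∀ ℓ i, Differentiable ℝ (fun s => layerOut g H (updB θ ℓ₀ j₀ s) x ℓ i) := by
  intro ℓ
  induction ℓ with
  | zero => intro i; exact differentiable_const _
  | succ ℓ ih =>
    intro i
    show Differentiable ℝ (fun s => g (∑ j ∈ Finset.range (H ℓ),
      (updB θ ℓ₀ j₀ s).w (ℓ + 1) i j * layerOut g H (updB θ ℓ₀ j₀ s) x ℓ j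
      + (updB θ ℓ₀ j₀ s).b (ℓ + 1) i))
    apply hg.comp
    apply Differentiable.add
    · apply Differentiable.fun_sum
      intro j _
      exact ((ih j).const_mul _)
    · show Differentiable ℝ (fun s => if ℓ + 1 = ℓ₀ ∧ i = j₀ then s else θ.b (ℓ + 1) i)
      by_cases hc : ℓ + 1 = ℓ₀ ∧ i = j₀
      · simp only [if_pos hc]; exact differentiable_id
      · simp only [if_neg hc]; exact differentiable_const _

lemma Remp_diffB (g : ℝ → ℝ) (H : ℕ → ℕ) {m : ℕ} (L P : ℕ) (X Y : ℕ → ℕ → ℝ)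
    (loss : (ℕ → ℝ) → (Fin m → ℝ) → ℝ)
    (hg : Differentiable ℝ g)
    (hloss : ∀ y : ℕ → ℝ,
      Differentiable ℝ (fun z : EuclideanSpace ℝ (Fin m) => loss y z))
    (θ : NNParams) (ℓ₀ j₀ : ℕ) :
    Differentiable ℝ (fun s => Remp g H L P X Y loss (updB θ ℓ₀ j₀ s)) := by
  unfold Remp
  apply Differentiable.const_mul
  apply Differentiable.fun_sum
  intro p _
  have hpre : ∀ r : ℕ,
      Differentiable ℝ (fun s => preact g H (updB θ ℓ₀ j₀ s) (X p) L r) := by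
    intro r
    unfold preact
    apply Differentiable.add
    · apply Differentiable.fun_sum
      intro i _
      exact (layerOut_diffB g H hg θ ℓ₀ j₀ (X p) (L - 1) i).const_mul _
    · show Differentiable ℝ (fun s => if L = ℓ₀ ∧ r = j₀ then s else θ.b L r)
      by_cases hc : L = ℓ₀ ∧ r = j₀
      · simp only [if_pos hc]; exact differentiable_id
      · simp only [if_neg hc]; exact differentiable_const _
  have hF : Differentiable ℝ (fun s => (EuclideanSpace.equiv (Fin m) ℝ).symm
      (fun r : Fin m => preact g H (updB θ ℓ₀ j₀ s) (X p) L r)) := by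
    apply ((EuclideanSpace.equiv (Fin m) ℝ).symm : (Fin m → ℝ) ≃L[ℝ] _).differentiable.comp
    exact differentiable_pi.mpr fun r => hpre r
  exact (hloss (Y p)).comp hF

/-- One β-step with zero outgoing weights preserves criticality. -/
lemma step_critical (g : ℝ → ℝ) (H : ℕ → ℕ) (L P : ℕ) (X Y : ℕ → ℕ → ℝ) {m : ℕ}
    (loss : (ℕ → ℝ) → (Fin m → ℝ) → ℝ)
    (hg : Differentiable ℝ g)
    (hloss : ∀ y : ℕ → ℝ,
      Differentiable ℝ (fun z : EuclideanSpace ℝ (Fin m) => loss y z))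
    (l K : ℕ) (hl : 1 ≤ l) (hlL : l + 1 ≤ L) (ζ : ℕ → ℝ) (θ : NNParams)
    (hθ : IsCritical g H L P X Y loss θ) :
    IsCritical g (enlargeH H l K) L P X Y loss
      (betaEmb g H l K ζ (fun _ _ => 0) θ) := by
  set θ' := betaEmb g H l K ζ (fun _ _ => 0) θ with hθ'
  have hll1 : l ≠ l + 1 := by omega
  have hwb : ∀ ℓ j i, (ℓ = l → j < H l) → (ℓ = l + 1 → i < H l) → θ'.w ℓ j i = θ.w ℓ j i := by
    intro ℓ j i h1 h2
    show (if ℓ = l ∧ H l ≤ j then (0:ℝ)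
      else if ℓ = l + 1 ∧ H l ≤ i then (fun _ _ => (0:ℝ)) j (i - H l)
      else θ.w ℓ j i) = θ.w ℓ j i
    rw [if_neg (fun h => absurd (h1 h.1) (not_lt.mpr h.2)),
      if_neg (fun h => absurd (h2 h.1) (not_lt.mpr h.2))]
  have hw0a : ∀ j i, H l ≤ j → θ'.w l j i = 0 := by
    intro j i hj
    show (if l = l ∧ H l ≤ j then (0:ℝ) else _) = 0
    rw [if_pos ⟨rfl, hj⟩]
  have hw0b : ∀ j i, H l ≤ i → θ'.w (l + 1) j i = 0 := by
    intro j i hi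
    show (if l + 1 = l ∧ H l ≤ j then (0:ℝ)
      else if l + 1 = l + 1 ∧ H l ≤ i then (fun _ _ => (0:ℝ)) j (i - H l)
      else θ.w (l+1) j i) = 0
    rw [if_neg (fun h => hll1 h.1.symm), if_pos ⟨rfl, hi⟩]
  have hbb : ∀ ℓ j, (ℓ = l → j < H l) → θ'.b ℓ j = θ.b ℓ j := by
    intro ℓ j h1
    show (if ℓ = l ∧ H l ≤ j then ζ (j - H l)
      else if ℓ = l + 1 then θ.b (l + 1) j - ∑ k ∈ Finset.range K,
        (fun _ _ => (0:ℝ)) j k * g (ζ k)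
      else θ.b ℓ j) = θ.b ℓ j
    rw [if_neg (fun h => absurd (h1 h.1) (not_lt.mpr h.2))]
    by_cases h2 : ℓ = l + 1
    · rw [if_pos h2]; subst h2; simp
    · rw [if_neg h2]
  have hbz : ∀ j, H l ≤ j → θ'.b l j = ζ (j - H l) := by
    intro j hj
    show (if l = l ∧ H l ≤ j then ζ (j - H l) else _) = ζ (j - H l)
    rw [if_pos ⟨rfl, hj⟩]
  constructor
  · -- weights
    intro ℓ j i h1 hL hj hi
    by_cases hjl : ℓ = l ∧ H l ≤ j
    · -- incoming weight of a new unit: risk constant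
      have hconst : ∀ t, Remp g (enlargeH H l K) L P X Y loss (updW θ' ℓ j i t)
          = Remp g H L P X Y loss θ := by
        intro t
        refine Remp_eq_of g H l K θ (updW θ' ℓ j i t) L P X Y loss hlL ?_ ?_ ?_
        · intro ℓ' j' i' c1 c2
          show (if ℓ' = ℓ ∧ j' = j ∧ i' = i then t else θ'.w ℓ' j' i') = θ.w ℓ' j' i'
          rw [if_neg (show ¬(ℓ' = ℓ ∧ j' = j ∧ i' = i) from
            fun h => absurd (c1 (h.1.trans hjl.1)) (not_lt.mpr (h.2.1 ▸ hjl.2)))]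
          exact hwb ℓ' j' i' c1 c2
        · intro ℓ' j' _ c2; exact hbb ℓ' j' c2
        · intro x j'
          have hz : ∀ k ∈ Finset.range K,
              (updW θ' ℓ j i t).w (l + 1) j' (H l + k) *
                layerOut g (enlargeH H l K) (updW θ' ℓ j i t) x l (H l + k) = 0 := by
            intro k _
            have : (updW θ' ℓ j i t).w (l + 1) j' (H l + k) = 0 := by
              show (if l + 1 = ℓ ∧ j' = j ∧ H l + k = i then t else _) = 0
              rw [if_neg (fun h => hll1 ((h.1.trans hjl.1).symm))]
              exact hw0b j' (H l + k) (Nat.le_add_right _ _)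
            rw [this, zero_mul]
          rw [Finset.sum_eq_zero hz, add_zero]
          exact hbb (l + 1) j' (fun h => absurd h.symm hll1)
      have : (fun t => Remp g (enlargeH H l K) L P X Y loss (updW θ' ℓ j i t))
          = fun _ => Remp g H L P X Y loss θ := funext hconst
      rw [this, deriv_const]
    · push_neg at hjl
      by_cases hil : ℓ = l + 1 ∧ H l ≤ i
      · -- outgoing weight of a new unit
        obtain ⟨rfl, hHi⟩ : ℓ = l + 1 ∧ H l ≤ i := hil
        have hjH : j < H (l + 1) := by
          have : enlargeH H l K (l + 1) = H (l + 1) := if_neg (fun h => hll1 h.symm)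
          rwa [this] at hj
        have hiK : i < H l + K := by
          have : enlargeH H l K (l + 1 - 1) = H l + K := by simp [enlargeH]
          rwa [this] at hi
        set c := θ.b (l + 1) j with hc
        set a := g (ζ (i - H l)) with ha
        have key : ∀ t, Remp g (enlargeH H l K) L P X Y loss (updW θ' (l + 1) j i t)
            = Remp g H L P X Y loss (updB θ (l + 1) j (c + t * a)) := by
          intro t
          refine Remp_eq_of g H l K _ _ L P X Y loss hlL ?_ ?_ ?_
          · intro ℓ' j' i' c1 c2
            show (if ℓ' = l + 1 ∧ j' = j ∧ i' = i then t else θ'.w ℓ' j' i')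
              = θ.w ℓ' j' i'
            rw [if_neg (show ¬(ℓ' = l + 1 ∧ j' = j ∧ i' = i) from
              fun h => absurd (c2 h.1) (not_lt.mpr (h.2.2 ▸ hHi)))]
            exact hwb ℓ' j' i' c1 c2
          · intro ℓ' j' hne c2
            show θ'.b ℓ' j'
              = (if ℓ' = l + 1 ∧ j' = j then c + t * a else θ.b ℓ' j')
            rw [if_neg (fun h => hne h.1)]
            exact hbb ℓ' j' c2
          · intro x j'
            have hout : ∀ k, layerOut g (enlargeH H l K)
                (updW θ' (l + 1) j i t) x l (H l + k) = g (ζ k) := by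
              intro k
              refine newOut g H l K hl (updW θ' (l + 1) j i t) x (H l + k) ?_ (ζ k) ?_
              · intro i'
                show (if l = l + 1 ∧ H l + k = j ∧ i' = i then t
                  else θ'.w l (H l + k) i') = 0
                rw [if_neg (fun h => hll1 h.1)]
                exact hw0a _ i' (Nat.le_add_right _ _)
              · show θ'.b l (H l + k) = ζ k
                rw [hbz _ (Nat.le_add_right _ _), Nat.add_sub_cancel_left]
            show (updW θ' (l + 1) j i t).b (l + 1) j' + _
              = (if l + 1 = l + 1 ∧ j' = j then c + t * a else θ.b (l + 1) j')
            have hbup : (updW θ' (l + 1) j i t).b (l + 1) j' = θ.b (l + 1) j' :=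
              hbb (l + 1) j' (fun h => absurd h.symm hll1)
            by_cases hj' : j' = j
            · rw [if_pos ⟨rfl, hj'⟩, hbup, hj']
              have hterm : ∀ k ∈ Finset.range K,
                  (updW θ' (l + 1) j i t).w (l + 1) j (H l + k) *
                    layerOut g (enlargeH H l K) (updW θ' (l + 1) j i t) x l (H l + k)
                  = if k = i - H l then t * a else 0 := by
                intro k _
                rw [hout k]
                show (if l + 1 = l + 1 ∧ j = j ∧ H l + k = i then t
                    else θ'.w (l+1) j (H l + k)) * g (ζ k) = _
                by_cases hk : k = i - H l
                · rw [if_pos ⟨rfl, rfl, (by omega : H l + k = i)⟩, if_pos hk, hk, ha]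
                · rw [if_neg (fun h => hk (by omega)), if_neg hk,
                    hw0b j _ (Nat.le_add_right _ _), zero_mul]
              rw [Finset.sum_congr rfl hterm,
                Finset.sum_ite_eq' (Finset.range K) (i - H l) (fun _ => t * a),
                if_pos (Finset.mem_range.mpr (by omega : i - H l < K)), hc]
            · rw [if_neg (fun h => hj' h.2), hbup]
              have hz : ∀ k ∈ Finset.range K,
                  (updW θ' (l + 1) j i t).w (l + 1) j' (H l + k) *
                    layerOut g (enlargeH H l K) (updW θ' (l + 1) j i t) x l (H l + k) = 0 := by
                intro k _
                have : (updW θ' (l + 1) j i t).w (l + 1) j' (H l + k) = 0 := by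
                  show (if l + 1 = l + 1 ∧ j' = j ∧ H l + k = i then t else _) = 0
                  rw [if_neg (fun h => hj' h.2.1)]
                  exact hw0b j' _ (Nat.le_add_right _ _)
                rw [this, zero_mul]
              rw [Finset.sum_eq_zero hz, add_zero]
        have hfun : (fun t => Remp g (enlargeH H l K) L P X Y loss (updW θ' (l + 1) j i t))
            = fun t => Remp g H L P X Y loss (updB θ (l + 1) j (c + t * a)) := funext key
        have hpt : θ'.w (l + 1) j i = 0 := hw0b j i hHi
        rw [hfun, hpt]
        have hF : Differentiable ℝ (fun s => Remp g H L P X Y loss (updB θ (l + 1) j s)) :=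
          Remp_diffB g H L P X Y loss hg hloss θ (l + 1) j
        have hu : HasDerivAt (fun t : ℝ => c + t * a) a 0 := by
          simpa using ((hasDerivAt_id (0:ℝ)).mul_const a).const_add c
        have hcrit : deriv (fun s => Remp g H L P X Y loss (updB θ (l + 1) j s))
            (θ.b (l + 1) j) = 0 := hθ.2 (l + 1) j (by omega) hlL hjH
        have hF' : HasDerivAt (fun s => Remp g H L P X Y loss (updB θ (l + 1) j s))
            0 (c + 0 * a) := by
          have : c + 0 * a = θ.b (l + 1) j := by rw [hc]; ring
          rw [this]
          simpa [hcrit] using (hF (θ.b (l + 1) j)).hasDerivAt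
        have := hF'.comp 0 hu
        have h0 : deriv ((fun s => Remp g H L P X Y loss (updB θ (l + 1) j s)) ∘
            fun t : ℝ => c + t * a) 0 = 0 * a := this.deriv
        simpa [Function.comp_def] using h0
      · -- old weight
        have hil' : ℓ = l + 1 → i < H l := fun h => by
          by_contra hcon; exact hil ⟨h, not_lt.mp hcon⟩
        have hjH : j < H ℓ := by
          by_cases hc : ℓ = l
          · exact hc ▸ hjl hc
          · have : enlargeH H l K ℓ = H ℓ := if_neg hc
            rwa [this] at hj
        have hiH : i < H (ℓ - 1) := by
          by_cases hc : ℓ - 1 = l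
          · have hℓ : ℓ = l + 1 := by omega
            rw [hc]; exact hil' hℓ
          · have : enlargeH H l K (ℓ - 1) = H (ℓ - 1) := if_neg hc
            rwa [this] at hi
        have key : ∀ t, Remp g (enlargeH H l K) L P X Y loss (updW θ' ℓ j i t)
            = Remp g H L P X Y loss (updW θ ℓ j i t) := by
          intro t
          refine Remp_eq_of g H l K _ _ L P X Y loss hlL ?_ ?_ ?_
          · intro ℓ' j' i' c1 c2
            show (if ℓ' = ℓ ∧ j' = j ∧ i' = i then t else θ'.w ℓ' j' i')
              = (if ℓ' = ℓ ∧ j' = j ∧ i' = i then t else θ.w ℓ' j' i')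
            by_cases hx : ℓ' = ℓ ∧ j' = j ∧ i' = i
            · rw [if_pos hx, if_pos hx]
            · rw [if_neg hx, if_neg hx]; exact hwb ℓ' j' i' c1 c2
          · intro ℓ' j' _ c2; exact hbb ℓ' j' c2
          · intro x j'
            have hz : ∀ k ∈ Finset.range K,
                (updW θ' ℓ j i t).w (l + 1) j' (H l + k) *
                  layerOut g (enlargeH H l K) (updW θ' ℓ j i t) x l (H l + k) = 0 := by
              intro k _
              have : (updW θ' ℓ j i t).w (l + 1) j' (H l + k) = 0 := by
                show (if l + 1 = ℓ ∧ j' = j ∧ H l + k = i then t else _) = 0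
                rw [if_neg (fun h => by
                  have := hil' h.1.symm
                  omega)]
                exact hw0b j' _ (Nat.le_add_right _ _)
              rw [this, zero_mul]
            rw [Finset.sum_eq_zero hz, add_zero]
            show (updW θ' ℓ j i t).b (l + 1) j' = (updW θ ℓ j i t).b (l + 1) j'
            exact hbb (l + 1) j' (fun h => absurd h.symm hll1)
        have hfun : (fun t => Remp g (enlargeH H l K) L P X Y loss (updW θ' ℓ j i t))
            = fun t => Remp g H L P X Y loss (updW θ ℓ j i t) := funext key
        have hpt : θ'.w ℓ j i = θ.w ℓ j i := hwb ℓ j i hjl hil'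
        rw [hfun, hpt]
        exact hθ.1 ℓ j i h1 hL hjH hiH
  · -- biases
    intro ℓ j h1 hL hj
    by_cases hjl : ℓ = l ∧ H l ≤ j
    · -- new bias: risk constant
      have hconst : ∀ t, Remp g (enlargeH H l K) L P X Y loss (updB θ' ℓ j t)
          = Remp g H L P X Y loss θ := by
        intro t
        refine Remp_eq_of g H l K θ _ L P X Y loss hlL ?_ ?_ ?_
        · intro ℓ' j' i' c1 c2; exact hwb ℓ' j' i' c1 c2
        · intro ℓ' j' _ c2
          show (if ℓ' = ℓ ∧ j' = j then t else θ'.b ℓ' j') = θ.b ℓ' j'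
          rw [if_neg (show ¬(ℓ' = ℓ ∧ j' = j) from
            fun h => absurd (c2 (h.1.trans hjl.1)) (not_lt.mpr (h.2 ▸ hjl.2)))]
          exact hbb ℓ' j' c2
        · intro x j'
          have hz : ∀ k ∈ Finset.range K,
              (updB θ' ℓ j t).w (l + 1) j' (H l + k) *
                layerOut g (enlargeH H l K) (updB θ' ℓ j t) x l (H l + k) = 0 := by
            intro k _
            have : (updB θ' ℓ j t).w (l + 1) j' (H l + k) = 0 :=
              hw0b j' _ (Nat.le_add_right _ _)
            rw [this, zero_mul]
          rw [Finset.sum_eq_zero hz, add_zero]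
          show (if l + 1 = ℓ ∧ j' = j then t else θ'.b (l + 1) j') = θ.b (l + 1) j'
          rw [if_neg (fun h => hll1 ((h.1.trans hjl.1).symm))]
          exact hbb (l + 1) j' (fun h => absurd h.symm hll1)
      have : (fun t => Remp g (enlargeH H l K) L P X Y loss (updB θ' ℓ j t))
          = fun _ => Remp g H L P X Y loss θ := funext hconst
      rw [this, deriv_const]
    · push_neg at hjl
      have hjH : j < H ℓ := by
        by_cases hc : ℓ = l
        · exact hc ▸ hjl hc
        · have : enlargeH H l K ℓ = H ℓ := if_neg hc
          rwa [this] at hj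
      have key : ∀ t, Remp g (enlargeH H l K) L P X Y loss (updB θ' ℓ j t)
          = Remp g H L P X Y loss (updB θ ℓ j t) := by
        intro t
        refine Remp_eq_of g H l K _ _ L P X Y loss hlL ?_ ?_ ?_
        · intro ℓ' j' i' c1 c2; exact hwb ℓ' j' i' c1 c2
        · intro ℓ' j' _ c2
          show (if ℓ' = ℓ ∧ j' = j then t else θ'.b ℓ' j')
            = (if ℓ' = ℓ ∧ j' = j then t else θ.b ℓ' j')
          by_cases hx : ℓ' = ℓ ∧ j' = j
          · rw [if_pos hx, if_pos hx]
          · rw [if_neg hx, if_neg hx]; exact hbb ℓ' j' c2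
        · intro x j'
          have hz : ∀ k ∈ Finset.range K,
              (updB θ' ℓ j t).w (l + 1) j' (H l + k) *
                layerOut g (enlargeH H l K) (updB θ' ℓ j t) x l (H l + k) = 0 := by
            intro k _
            have : (updB θ' ℓ j t).w (l + 1) j' (H l + k) = 0 :=
              hw0b j' _ (Nat.le_add_right _ _)
            rw [this, zero_mul]
          rw [Finset.sum_eq_zero hz, add_zero]
          show (if l + 1 = ℓ ∧ j' = j then t else θ'.b (l + 1) j')
            = (if l + 1 = ℓ ∧ j' = j then t else θ.b (l + 1) j')
          by_cases hx : l + 1 = ℓ ∧ j' = j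
          · rw [if_pos hx, if_pos hx]
          · rw [if_neg hx, if_neg hx]
            exact hbb (l + 1) j' (fun h => absurd h.symm hll1)
      have hfun : (fun t => Remp g (enlargeH H l K) L P X Y loss (updB θ' ℓ j t))
          = fun t => Remp g H L P X Y loss (updB θ ℓ j t) := funext key
      have hpt : θ'.b ℓ j = θ.b ℓ j := hbb ℓ j hjl
      rw [hfun, hpt]
      exact hθ.2 ℓ j h1 hL hjH

lemma multi_critical (g : ℝ → ℝ) (L P : ℕ) (X Y : ℕ → ℕ → ℝ) {m : ℕ}
    (loss : (ℕ → ℝ) → (Fin m → ℝ) → ℝ)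
    (hg : Differentiable ℝ g)
    (hloss : ∀ y : ℕ → ℝ,
      Differentiable ℝ (fun z : EuclideanSpace ℝ (Fin m) => loss y z))
    (ζ : ℕ → ℕ → ℝ) :
    ∀ (RG : List (ℕ × ℕ)) (H : ℕ → ℕ) (θ : NNParams),
      (∀ p ∈ RG, 1 ≤ p.1 ∧ p.1 + 1 ≤ L) →
      IsCritical g H L P X Y loss θ →
      IsCritical g (multiEnlargeH H RG) L P X Y loss
        (multiBeta g ζ (fun _ _ _ => 0) H RG θ)
  | [], H, θ, _, hθ => hθ
  | (l, K) :: rest, H, θ, hR, hθ => by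
    have hhead := hR (l, K) List.mem_cons_self
    show IsCritical g (multiEnlargeH (enlargeH H l K) rest) L P X Y loss
      (multiBeta g ζ (fun _ _ _ => 0) (enlargeH H l K) rest
        (betaEmb g H l K (ζ l) (fun _ _ => 0) θ))
    exact multi_critical g L P X Y loss hg hloss ζ rest (enlargeH H l K) _
      (fun p hp => hR p (List.mem_cons_of_mem _ hp))
      (step_critical g H L P X Y loss hg hloss l K hhead.1 hhead.2 (ζ l) θ hθ)

end Aux

/-- If `g` and the loss (in its second argument) are differentiable and
`θ` is a stationary point of the empirical risk of the original network, then the point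
`θ̂ = B_{ζ0}(θ, R, Γ)` obtained by composing `β` embeddings with zero outgoing weights
(adding `K_{r_i}` neurons to the pairwise distinct hidden layers `r_i ∈ {1, …, L-1}`) is
a stationary point of the empirical risk of the enlarged network. -/
theorem multiBeta_zero_is_critical
    (g : ℝ → ℝ) (H : ℕ → ℕ) (L P : ℕ) (X Y : ℕ → ℕ → ℝ)
    (loss : (ℕ → ℝ) → (Fin (H L) → ℝ) → ℝ)
    (hg : Differentiable ℝ g)
    (hloss : ∀ y : ℕ → ℝ,
      Differentiable ℝ (fun z : EuclideanSpace ℝ (Fin (H L)) => loss y z))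
    (RG : List (ℕ × ℕ)) (hnd : (RG.map Prod.fst).Nodup)
    (hR : ∀ p ∈ RG, 1 ≤ p.1 ∧ p.1 + 1 ≤ L)
    (ζ : ℕ → ℕ → ℝ) (θ : NNParams)
    (hθ : IsCritical g H L P X Y loss θ)
    (θhat : NNParams) (hemb : θhat = multiBeta g ζ (fun _ _ _ => 0) H RG θ) :
    IsCritical g (multiEnlargeH H RG) L P X Y loss θhat := by
  subst hemb
  exact multi_critical g L P X Y loss hg hloss ζ RG H θ hR hθ
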